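/- Let T be a finite semigroup, π a set of primes, and suppose for every non-π'-free L-class L of S = CP_π(T) we fix an H-class H_L and an element g_L of the lifted Schützenberger group Γ̃_R(H_L) of prime power order p^n (p ∈ π') representing an element of prime order p in Γ_R(H_L). Define m_s = I for π'-free s and m_s = g_{L_s}^{ω+*} otherwise, and B(s) = s·m_s. Then B is a preblowup operator: B fixes π'-free elements, B(s) <_H s for non-π'-free s, s ⊆ B(s), and m_s depends only on the L-class of s. -/

import Mathlib

open Pointwise

/-- Multiplication of an element of a semigroup `M` by an element of `M¹ = M` with an
adjoined identity (modelled as `Option M`, `none` being the identity `I`). -/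
def hmul {M : Type*} [Mul M] (h : M) : Option M → M := fun s => s.elim h (fun u => h * u)

/-- Multiplication in `M¹` (modelled as `Option M`). -/
def omul {M : Type*} [Mul M] : Option M → Option M → Option M
  | none, t => t
  | some a, none => some a
  | some a, some b => some (a * b)

/-- `mpow a n = aⁿ` for `n ≥ 1` (with the junk value `mpow a 0 = a`). -/
def mpow {M : Type*} [Mul M] (a : M) : ℕ → M
  | 0 => a
  | 1 => a
  | n+2 => mpow a (n+1) * a

/-- Green's preorder `a ≤_L b` iff `a ∈ M¹ b`. -/
def leL {M : Type*} [Mul M] (a b : M) : Prop := a = b ∨ ∃ u, a = u * b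
/-- Green's preorder `a ≤_R b` iff `a ∈ b M¹`. -/
def leR {M : Type*} [Mul M] (a b : M) : Prop := a = b ∨ ∃ u, a = b * u
/-- Green's `L`-equivalence. -/
def eqL {M : Type*} [Mul M] (a b : M) : Prop := leL a b ∧ leL b a
/-- Green's `R`-equivalence. -/
def eqR {M : Type*} [Mul M] (a b : M) : Prop := leR a b ∧ leR b a
/-- Green's `H`-equivalence. -/
def eqH {M : Type*} [Mul M] (a b : M) : Prop := eqL a b ∧ eqR a b
/-- `a <_H b` : `a ≤_L b`, `a ≤_R b`, but `a` is not `H`-equivalent to `b`. -/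
def ltH {M : Type*} [Mul M] (a b : M) : Prop := leL a b ∧ leR a b ∧ ¬ eqH a b

/-- The `H`-class of `a`, as a type. -/
def HclsT {M : Type*} [Mul M] (a : M) := {x : M // eqH x a}

/-- The (right) Schützenberger group of the `H`-class of `a`: the set of transformations of the
`H`-class of `a` induced by right multiplication by elements of the right stabilizer in `M¹`. -/
def gammaR {M : Type*} [Mul M] (a : M) : Set (HclsT a → HclsT a) :=
  {f | ∃ s : Option M, (∀ h : HclsT a, eqH (hmul h.1 s) a) ∧
        ∀ h : HclsT a, (f h).1 = hmul h.1 s}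

/-- An element is `π'`-free if the Schützenberger group of its (`J`-class, equivalently its)
`H`-class is a `π`-group: every prime dividing its order lies in `π`. -/
def piFree {M : Type*} [Mul M] (π : Set ℕ) (a : M) : Prop :=
  ∀ p : ℕ, p.Prime → p ∣ (gammaR a).ncard → p ∈ π

/-- Membership in `CP_π(T)`: the smallest subsemigroup of `P(T)` containing the singletons and
closed under `Z ↦ Z^{ω+*} = ⋃_{n ≥ 1} Zⁿ` whenever `Z` generates a cyclic `π'`-group
(i.e. `Z` is a group element of order `k` divisible only by primes outside `π`). -/
inductive CPmem (π : Set ℕ) {T : Type} [Semigroup T] : Set T → Prop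
  | single (t : T) : CPmem π {t}
  | mul {X Y : Set T} : CPmem π X → CPmem π Y → CPmem π (X * Y)
  | omega {Z : Set T} (k : ℕ) (hk : 0 < k) (hcyc : mpow Z (k+1) = Z)
      (hπ : ∀ p : ℕ, p.Prime → p ∣ k → p ∉ π) :
      CPmem π Z → CPmem π (⋃ n, mpow Z (n+1))

/-- The semigroup `CP_π(T)`, as a subsemigroup of `P(T)`. -/
def CPT (π : Set ℕ) (T : Type) [Semigroup T] : Type := {X : Set T // CPmem π X}

noncomputable instance {π : Set ℕ} {T : Type} [Semigroup T] : Mul (CPT π T) :=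
  ⟨fun a b => ⟨a.1 * b.1, CPmem.mul a.2 b.2⟩⟩

noncomputable instance {π : Set ℕ} {T : Type} [Semigroup T] : Semigroup (CPT π T) :=
  { (inferInstance : Mul (CPT π T)) with
    mul_assoc := fun a b c => Subtype.ext (mul_assoc a.1 b.1 c.1) }

/-- A preblowup operator on `S = CP_π(T)`: `B` fixes `π'`-free elements, strictly `H`-decreases
non-`π'`-free elements, blows elements up (`s ⊆ B(s)` as subsets of `T`), and is given by right
multiplication `B(s) = s·m_s` by multipliers `m_s ∈ S¹` constant on `L`-classes. -/
def IsPreblowup (π : Set ℕ) (T : Type) [Semigroup T]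
    (B : CPT π T → CPT π T) (m : CPT π T → Option (CPT π T)) : Prop :=
  (∀ s, piFree π s → B s = s) ∧
  (∀ s, ¬ piFree π s → ltH (B s) s) ∧
  (∀ s, s.1 ⊆ (B s).1) ∧
  (∀ s, B s = hmul s (m s)) ∧
  (∀ s s', eqL s s' → m s = m s')

section Helpers
variable {M : Type*} [Semigroup M]

/-- Left multiplication by an element of `M¹`. -/
def lmul (v : Option M) (b : M) : M := v.elim b (· * b)

@[simp] lemma lmul_none (b : M) : lmul none b = b := rfl
@[simp] lemma lmul_some (a b : M) : lmul (some a) b = a * b := rfl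
@[simp] lemma hmul_none (b : M) : hmul b none = b := rfl
@[simp] lemma hmul_some (b a : M) : hmul b (some a) = b * a := rfl

lemma lmul_mul (v : Option M) (b c : M) : lmul v (b * c) = lmul v b * c := by
  cases v with
  | none => rfl
  | some a => exact (mul_assoc a b c).symm

lemma lmul_hmul (v : Option M) (b : M) (t : Option M) :
    lmul v (hmul b t) = hmul (lmul v b) t := by
  cases t with
  | none => rfl
  | some a => exact (lmul_mul v b a)

lemma lmul_lmul (v w : Option M) (b : M) : lmul v (lmul w b) = lmul (omul v w) b := by
  cases v with
  | none => rfl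
  | some a =>
    cases w with
    | none => rfl
    | some c => exact (mul_assoc a c b).symm

lemma omul_assoc (u v w : Option M) : omul (omul u v) w = omul u (omul v w) := by
  cases u <;> cases v <;> cases w <;> simp [omul, mul_assoc]

lemma leL_iff {a b : M} : leL a b ↔ ∃ v : Option M, a = lmul v b := by
  constructor
  · rintro (rfl | ⟨u, rfl⟩)
    · exact ⟨none, rfl⟩
    · exact ⟨some u, rfl⟩
  · rintro ⟨v, rfl⟩
    cases v with
    | none => exact Or.inl rfl
    | some u => exact Or.inr ⟨u, rfl⟩

lemma leR_iff {a b : M} : leR a b ↔ ∃ t : Option M, a = hmul b t := by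
  constructor
  · rintro (rfl | ⟨u, rfl⟩)
    · exact ⟨none, rfl⟩
    · exact ⟨some u, rfl⟩
  · rintro ⟨t, rfl⟩
    cases t with
    | none => exact Or.inl rfl
    | some u => exact Or.inr ⟨u, rfl⟩

lemma leL_refl (a : M) : leL a a := Or.inl rfl
lemma leR_refl (a : M) : leR a a := Or.inl rfl
lemma eqL_refl (a : M) : eqL a a := ⟨leL_refl a, leL_refl a⟩
lemma eqH_refl (a : M) : eqH a a := ⟨⟨leL_refl a, leL_refl a⟩, ⟨leR_refl a, leR_refl a⟩⟩

lemma leL_trans {a b c : M} (h1 : leL a b) (h2 : leL b c) : leL a c := by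
  rw [leL_iff] at *
  obtain ⟨v, rfl⟩ := h1; obtain ⟨w, rfl⟩ := h2
  exact ⟨omul v w, lmul_lmul v w c⟩

lemma eqL_symm {a b : M} (h : eqL a b) : eqL b a := ⟨h.2, h.1⟩
lemma eqL_trans {a b c : M} (h1 : eqL a b) (h2 : eqL b c) : eqL a c :=
  ⟨leL_trans h1.1 h2.1, leL_trans h2.2 h1.2⟩

lemma mpow_one (a : M) : mpow a 1 = a := rfl

lemma mpow_succ (a : M) (n : ℕ) (hn : 1 ≤ n) : mpow a (n+1) = mpow a n * a := by
  obtain ⟨k, rfl⟩ := Nat.exists_eq_add_of_le hn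
  rw [show 1+k+1 = k+2 by ring, show 1+k = k+1 by ring]
  rfl

lemma mpow_add (a : M) : ∀ n, 1 ≤ n → ∀ m, 1 ≤ m → mpow a (m + n) = mpow a m * mpow a n
  | 0, h => by omega
  | 1, _ => fun m hm => mpow_succ a m hm
  | n+2, _ => fun m hm => by
    have h1 : m + (n + 2) = (m + (n+1)) + 1 := by ring
    rw [h1, mpow_succ a (m + (n+1)) (by omega), mpow_add a (n+1) (by omega) m hm,
      mpow_succ a (n+1) (by omega), mul_assoc]

lemma mpow_mul (a : M) : ∀ k, 1 ≤ k → ∀ m, 1 ≤ m → mpow (mpow a m) k = mpow a (m * k)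
  | 0, h => by omega
  | 1, _ => fun m hm => by rw [mul_one]; rfl
  | k+2, _ => fun m hm => by
    rw [mpow_succ _ (k+1) (by omega), mpow_mul a (k+1) (by omega) m hm,
      show m * (k+2) = m * (k+1) + m by ring, mpow_add a m hm (m * (k+1)) (Nat.mul_pos hm (Nat.succ_pos k))]

end Helpers
section Green
variable {M : Type*} [Semigroup M]

lemma green_inv {a a' : M} {lam mu : Option M} (h1 : a = lmul lam a') (h2 : a' = lmul mu a)
    {x : M} (hx : leR x a) : lmul lam (lmul mu x) = x := by
  obtain ⟨r, rfl⟩ := leR_iff.1 hx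
  rw [lmul_hmul, lmul_hmul, ← h2, ← h1]

lemma green_step {a a' : M} {lam mu : Option M} (h1 : a = lmul lam a') (h2 : a' = lmul mu a)
    {x : M} (hx : eqH x a) : eqH (lmul mu x) a' := by
  obtain ⟨⟨hxLa, haLx⟩, ⟨hxRa, haRx⟩⟩ := hx
  constructor
  · constructor
    · -- leL (lmul mu x) a'
      obtain ⟨l, rfl⟩ := leL_iff.1 hxLa
      rw [leL_iff]
      exact ⟨_, by rw [lmul_lmul, h1, lmul_lmul]⟩
    · -- leL a' (lmul mu x)
      obtain ⟨dd, hdd⟩ := leL_iff.1 haLx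
      rw [leL_iff]
      have key : a' = lmul mu (lmul dd (lmul lam (lmul mu x))) := by
        rw [green_inv h1 h2 hxRa, ← hdd, ← h2]
      exact ⟨omul mu (omul dd lam), by rw [key, lmul_lmul dd, lmul_lmul mu]⟩
  · constructor
    · obtain ⟨r, rfl⟩ := leR_iff.1 hxRa
      rw [leR_iff]
      exact ⟨r, by rw [lmul_hmul, ← h2]⟩
    · obtain ⟨r, hr⟩ := leR_iff.1 haRx
      rw [leR_iff]
      refine ⟨r, ?_⟩
      rw [h2, hr, lmul_hmul]

/-- Transport of a transformation of the `H`-class of `a` to one of the `H`-class of `a'`,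
for `L`-equivalent `a, a'`. -/
def greenMap {a a' : M} {lam mu : Option M} (h1 : a = lmul lam a') (h2 : a' = lmul mu a)
    (f : HclsT a → HclsT a) : HclsT a' → HclsT a' :=
  fun x => ⟨lmul mu (f ⟨lmul lam x.1, green_step h2 h1 x.2⟩).1,
    green_step h1 h2 (f ⟨lmul lam x.1, green_step h2 h1 x.2⟩).2⟩

lemma greenMap_leftInv {a a' : M} {lam mu : Option M} (h1 : a = lmul lam a') (h2 : a' = lmul mu a)
    (f : HclsT a → HclsT a) : greenMap h2 h1 (greenMap h1 h2 f) = f := by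
  funext x
  apply Subtype.ext
  show lmul lam ((greenMap h1 h2 f) ⟨lmul mu x.1, _⟩).1 = (f x).1
  show lmul lam (lmul mu (f ⟨lmul lam (lmul mu x.1), _⟩).1) = (f x).1
  have hx : (⟨lmul lam (lmul mu x.1), green_step h2 h1 (green_step h1 h2 x.2)⟩ : HclsT a) = x :=
    Subtype.ext (green_inv h1 h2 x.2.2.1)
  rw [hx]
  exact green_inv h1 h2 (f x).2.2.1

lemma greenMap_mem {a a' : M} {lam mu : Option M} (h1 : a = lmul lam a') (h2 : a' = lmul mu a)
    {f : HclsT a → HclsT a} (hf : f ∈ gammaR a) : greenMap h1 h2 f ∈ gammaR a' := by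
  obtain ⟨t, ht1, ht2⟩ := hf
  refine ⟨t, ?_, ?_⟩
  · intro x
    have hxa : eqH (lmul lam x.1) a := green_step h2 h1 x.2
    have : hmul x.1 t = lmul mu (hmul (lmul lam x.1) t) := by
      rw [lmul_hmul]
      congr 1
      exact (green_inv h2 h1 x.2.2.1).symm
    rw [this]
    exact green_step h1 h2 (ht1 ⟨lmul lam x.1, hxa⟩)
  · intro x
    show lmul mu (f ⟨lmul lam x.1, _⟩).1 = hmul x.1 t
    exact (congrArg (lmul mu) (ht2 _)).trans ((lmul_hmul mu _ t).trans
      (congrArg (hmul · t) (green_inv h2 h1 x.2.2.1)))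

lemma gammaR_ncard_eq_of_eqL {a a' : M} (h : eqL a a') :
    (gammaR a).ncard = (gammaR a').ncard := by
  obtain ⟨mu, h2⟩ := leL_iff.1 h.2
  obtain ⟨lam, h1⟩ := leL_iff.1 h.1
  have hbij : Set.BijOn (greenMap h1 h2) (gammaR a) (gammaR a') := by
    refine ⟨fun f hf => greenMap_mem h1 h2 hf, ?_, ?_⟩
    · intro f hf f' hf' he
      have := congrArg (greenMap h2 h1) he
      rwa [greenMap_leftInv h1 h2, greenMap_leftInv h1 h2] at this
    · intro f' hf'
      exact ⟨greenMap h2 h1 f', greenMap_mem h2 h1 hf', greenMap_leftInv h2 h1 f'⟩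
  rw [← hbij.image_eq, Set.ncard_image_of_injOn hbij.injOn]

lemma piFree_congr {π : Set ℕ} {a a' : M} (h : eqL a a') : piFree π a ↔ piFree π a' := by
  unfold piFree
  rw [gammaR_ncard_eq_of_eqL h]

end Green
section Arith
open Finset in
lemma pi_part_exists (π : Set ℕ) (d : ℕ) (hd : 1 ≤ d) :
    ∃ dp c : ℕ, dp * c = d ∧ 1 ≤ dp ∧ 1 ≤ c ∧
      (∀ q : ℕ, q.Prime → q ∣ dp → q ∈ π) ∧ (∀ q : ℕ, q.Prime → q ∣ c → q ∉ π) := by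
  classical
  set F := d.primeFactors with hF
  refine ⟨∏ q ∈ F.filter (· ∈ π), q ^ d.factorization q,
    ∏ q ∈ F.filter (fun q => q ∉ π), q ^ d.factorization q, ?_, ?_, ?_, ?_, ?_⟩
  · rw [Finset.prod_filter_mul_prod_filter_not F (· ∈ π) (fun q => q ^ d.factorization q)]
    rw [hF, ← Nat.support_factorization]
    exact Nat.factorization_prod_pow_eq_self (by omega)
  · exact Finset.prod_pos (fun q hq => pow_pos
      (Nat.prime_of_mem_primeFactors (Finset.mem_filter.1 hq).1).pos _)
  · exact Finset.prod_pos (fun q hq => pow_pos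
      (Nat.prime_of_mem_primeFactors (Finset.mem_filter.1 hq).1).pos _)
  · intro q hq hdvd
    obtain ⟨r, hr, hqr⟩ := hq.prime.exists_mem_finset_dvd hdvd
    obtain ⟨hrF, hrπ⟩ := Finset.mem_filter.1 hr
    have hrp := Nat.prime_of_mem_primeFactors hrF
    rwa [(Nat.prime_dvd_prime_iff_eq hq hrp).1 (hq.dvd_of_dvd_pow hqr)]
  · intro q hq hdvd
    obtain ⟨r, hr, hqr⟩ := hq.prime.exists_mem_finset_dvd hdvd
    obtain ⟨hrF, hrπ⟩ := Finset.mem_filter.1 hr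
    have hrp := Nat.prime_of_mem_primeFactors hrF
    rwa [(Nat.prime_dvd_prime_iff_eq hq hrp).1 (hq.dvd_of_dvd_pow hqr)]

lemma exists_good_m (N dp i : ℕ) (hN : 1 ≤ N) (hdp : 1 ≤ dp) (hco : N.Coprime dp) :
    ∃ m : ℕ, m ≡ 1 [MOD N] ∧ dp ∣ m ∧ i ≤ m ∧ 1 ≤ m := by
  obtain ⟨k, hk1, hk2⟩ := Nat.chineseRemainder hco 1 0
  refine ⟨k + (i+1) * (N * dp), ?_, ?_, ?_, ?_⟩
  · have h0 : (i+1) * (N * dp) ≡ 0 [MOD N] :=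
      (Nat.modEq_zero_iff_dvd).2 ⟨(i+1) * dp, by ring⟩
    simpa using hk1.add h0
  · exact Nat.dvd_add ((Nat.modEq_zero_iff_dvd).1 hk2) ⟨(i+1) * N, by ring⟩
  · have : i + 1 ≤ (i+1) * (N * dp) :=
      Nat.le_mul_of_pos_right _ (Nat.mul_pos hN hdp)
    omega
  · have := Nat.mul_pos (show 0 < i+1 by omega) (Nat.mul_pos hN hdp)
    omega

variable {M : Type*} [Semigroup M]

lemma exists_period [Finite M] (a : M) :
    ∃ i d : ℕ, 1 ≤ i ∧ 1 ≤ d ∧ mpow a (i + d) = mpow a i := by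
  obtain ⟨x, y, hxy, he⟩ := Finite.exists_ne_map_eq_of_infinite (fun n : ℕ => mpow a (n+1))
  rcases Nat.lt_or_ge x y with h | h
  · exact ⟨x + 1, y - x, by omega, by omega, by
      rw [show x + 1 + (y - x) = y + 1 by omega]; exact he.symm⟩
  · have h' : y < x := by omega
    exact ⟨y + 1, x - y, by omega, by omega, by
      rw [show y + 1 + (x - y) = x + 1 by omega]; exact he⟩

lemma mpow_period_step {a : M} {i d : ℕ} (hi : 1 ≤ i) (hd : 1 ≤ d)
    (h : mpow a (i + d) = mpow a i) : ∀ j, i ≤ j → mpow a (j + d) = mpow a j := by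
  intro j hj
  obtain ⟨e, rfl⟩ := Nat.exists_eq_add_of_le hj
  rcases Nat.eq_zero_or_pos e with rfl | he
  · simpa using h
  · rw [show i + e + d = (i + d) + e by ring, mpow_add a e he (i+d) (by omega), h,
      ← mpow_add a e he i hi]

lemma mpow_period {a : M} {i d : ℕ} (hi : 1 ≤ i) (hd : 1 ≤ d)
    (h : mpow a (i + d) = mpow a i) : ∀ t j, i ≤ j → mpow a (j + t * d) = mpow a j := by
  intro t
  induction t with
  | zero => simp
  | succ t ih =>
    intro j hj
    rw [show j + (t+1) * d = (j + t * d) + d by ring,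
      mpow_period_step hi hd h (j + t * d) (by omega), ih j hj]

lemma mpow_cyc_step {a : M} {N : ℕ} (hN : 1 ≤ N) (h : mpow a (N + 1) = a) :
    ∀ k, 1 ≤ k → mpow a (k + N) = mpow a k := by
  intro k hk
  obtain ⟨j, rfl⟩ := Nat.exists_eq_add_of_le hk
  rcases Nat.eq_zero_or_pos j with rfl | hj
  · simpa [Nat.add_comm, mpow_one] using h
  · rw [show 1 + j + N = j + (N + 1) by ring, mpow_add a (N+1) (by omega) j hj, h,
      show 1 + j = j + 1 by ring, mpow_succ a j hj]

lemma mpow_congr_modEq {a : M} {N : ℕ} (hN : 1 ≤ N) (h : mpow a (N + 1) = a) :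
    ∀ x y, 1 ≤ x → 1 ≤ y → x ≡ y [MOD N] → mpow a x = mpow a y := by
  have key : ∀ t x, 1 ≤ x → mpow a (x + t * N) = mpow a x := by
    intro t
    induction t with
    | zero => simp
    | succ t ih =>
      intro x hx
      rw [show x + (t+1) * N = (x + t * N) + N by ring,
        mpow_cyc_step hN h (x + t * N) (by omega), ih x hx]
  intro x y hx hy hmod
  rcases Nat.le_total x y with hle | hle
  · obtain ⟨c, hc⟩ := (Nat.modEq_iff_dvd' hle).1 hmod
    have hc' : y - x = c * N := hc.trans (Nat.mul_comm N c)
    have : y = x + c * N := by omega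
    rw [this, key c x hx]
  · obtain ⟨c, hc⟩ := (Nat.modEq_iff_dvd' hle).1 hmod.symm
    have hc' : x - y = c * N := hc.trans (Nat.mul_comm N c)
    have : x = y + c * N := by omega
    rw [this, key c y hy]

end Arith
section CPTfacts
variable {π : Set ℕ} {T : Type} [Semigroup T]

lemma CPT.mul_val (a b : CPT π T) : (a * b).1 = a.1 * b.1 := rfl

lemma CPT.mpow_val (x : CPT π T) : ∀ n, (mpow x n).1 = mpow x.1 n
  | 0 => rfl
  | 1 => rfl
  | n+2 => by
    show (mpow x (n+1) * x).1 = mpow x.1 (n+1) * x.1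
    rw [CPT.mul_val, CPT.mpow_val x (n+1)]

end CPTfacts
/-- Construction of the preblowup operator on `S = CP_π(T)`.  For every non-`π'`-free element
`s` (with `L`-class `L_s`), fix (constantly on `L`-classes) an `H`-class `H_{L_s}` with base
point `h₀ s` and an element `g s` of the lifted Schützenberger group `Γ̃_R(H_{L_s})` of prime
power order `(p s)^(nn s)` with `p s ∈ π'`, representing an element of prime order `p s` of
`Γ_R(H_{L_s})` (so right multiplication by `g s` stabilizes `H_{L_s}`, `(g s)^(p s)` acts as
the identity on it, and `g s` acts nontrivially).  Then `m_s := I` for `π'`-free `s` and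
`m_s := (g s)^{ω+*} = ⋃_{k ≥ 1} (g s)^k` otherwise defines a preblowup operator
`B(s) = s·m_s`. -/
theorem stmt_16 (π : Set ℕ) (T : Type) [Semigroup T] [Fintype T]
    (g h₀ : CPT π T → CPT π T) (p nn : CPT π T → ℕ)
    (hgL : ∀ s s', ¬ piFree π s → eqL s s' → g s = g s')
    (hh₀L : ∀ s s', ¬ piFree π s → eqL s s' → h₀ s = h₀ s')
    (hh₀ : ∀ s, ¬ piFree π s → eqL (h₀ s) s)
    (hp : ∀ s, ¬ piFree π s → (p s).Prime ∧ p s ∉ π ∧ 1 ≤ nn s)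
    (hgpow : ∀ s, ¬ piFree π s → mpow (g s) (p s ^ nn s + 1) = g s)
    (hstab : ∀ s, ¬ piFree π s → ∀ h, eqH h (h₀ s) → eqH (h * g s) (h₀ s))
    (hordp : ∀ s, ¬ piFree π s → ∀ h, eqH h (h₀ s) → h * mpow (g s) (p s) = h)
    (hnontriv : ∀ s, ¬ piFree π s → ∃ h, eqH h (h₀ s) ∧ h * g s ≠ h) :
    ∃ m : CPT π T → Option (CPT π T),
      (∀ s, piFree π s → m s = none) ∧
      (∀ s, ¬ piFree π s → ∃ u : CPT π T, m s = some u ∧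
        (u.1 : Set T) = ⋃ k, ((mpow (g s) (k+1)).1 : Set T)) ∧
      IsPreblowup π T (fun s => hmul s (m s)) m := by
  classical
  haveI hfin : Finite (CPT π T) := by unfold CPT; infer_instance
  have hNpos : ∀ s, ¬ piFree π s → 1 ≤ p s ^ nn s := fun s hs =>
    Nat.one_le_pow _ _ (hp s hs).1.pos
  have hcycS : ∀ s (hs : ¬ piFree π s), mpow (g s).1 (p s ^ nn s + 1) = (g s).1 := by
    intro s hs
    have := congrArg Subtype.val (hgpow s hs)
    rwa [CPT.mpow_val] at this
  have hπN : ∀ s, ¬ piFree π s → ∀ q : ℕ, q.Prime → q ∣ p s ^ nn s → q ∉ π := by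
    intro s hs q hq hdvd
    rw [(Nat.prime_dvd_prime_iff_eq hq (hp s hs).1).1 (hq.dvd_of_dvd_pow hdvd)]
    exact (hp s hs).2.1
  let U : ∀ s, ¬ piFree π s → CPT π T := fun s hs =>
    ⟨⋃ n, mpow (g s).1 (n+1),
      CPmem.omega _ (hNpos s hs) (hcycS s hs) (hπN s hs) (g s).2⟩
  have hUval : ∀ s (hs : ¬ piFree π s),
      (U s hs).1 = ⋃ k, ((mpow (g s) (k+1)).1 : Set T) := by
    intro s hs
    show (⋃ n, mpow (g s).1 (n+1)) = _
    simp only [CPT.mpow_val]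
  -- the main per-element facts
  have main : ∀ s (hs : ¬ piFree π s),
      leL (s * U s hs) s ∧ ¬ eqH (s * U s hs) s ∧ s.1 ⊆ (s * U s hs).1 := by
    intro s hs
    set G := g s with hG
    set H0 := h₀ s with hH0
    set P := p s with hP
    set N := P ^ nn s with hN
    have hPp : P.Prime := (hp s hs).1
    have hN1 : 1 ≤ N := hNpos s hs
    have hcyc : mpow G (N+1) = G := hgpow s hs
    -- powers of G fixing H0
    have hH0P : H0 * mpow G P = H0 := hordp s hs H0 (eqH_refl H0)
    have hjp : ∀ j, 1 ≤ j → H0 * mpow G (j * P) = H0 := by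
      intro j hj
      induction j with
      | zero => omega
      | succ j ih =>
        rcases Nat.eq_zero_or_pos j with rfl | hj'
        · simpa using hH0P
        · rw [show (j+1) * P = j * P + P by ring,
            mpow_add G P hPp.pos (j * P) (Nat.mul_pos hj' hPp.pos), ← mul_assoc,
            ih hj', hH0P]
    have hH0N : H0 * mpow G N = H0 := by
      have : N = P ^ (nn s - 1) * P := by
        rw [hN, ← pow_succ]
        congr 1
        have := (hp s hs).2.2
        omega
      rw [this]
      exact hjp _ (Nat.one_le_pow _ _ hPp.pos)
    -- L-relations between s and H0
    obtain ⟨v, hv⟩ := leL_iff.1 (hh₀ s hs).2  -- s = lmul v H0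
    obtain ⟨w, hw⟩ := leL_iff.1 (hh₀ s hs).1  -- H0 = lmul w s
    rw [← hH0] at hv hw
    have hsGN : s * mpow G N = s := by
      rw [hv, ← lmul_mul, hH0N]
    -- freeness of the action of G on the H-class of H0
    have hfree : ∀ h, eqH h H0 → h * G ≠ h := by
      intro h hh habs
      obtain ⟨h1, hh1, hne⟩ := hnontriv s hs
      have h1L : leL h1 h := leL_trans hh1.1.1 hh.1.2
      obtain ⟨z, hz⟩ := leL_iff.1 h1L
      exact hne (by rw [hz, ← lmul_mul, habs])
    -- extract lambda with H0 * G = lam * H0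
    have hstab0 : eqH (H0 * G) H0 := hstab s hs H0 (eqH_refl H0)
    have hlamE : ∃ lam : CPT π T, H0 * G = lam * H0 := by
      rcases hstab0.1.1 with heq | h
      · exact absurd heq (hfree H0 (eqH_refl H0))
      · exact h
    obtain ⟨lam, hlam⟩ := hlamE
    have hlam_pow : ∀ k, 1 ≤ k → mpow lam k * H0 = H0 * mpow G k := by
      intro k hk
      induction k with
      | zero => omega
      | succ k ih =>
        rcases Nat.eq_zero_or_pos k with rfl | hk'
        · exact hlam.symm
        · rw [mpow_succ lam k hk', mpow_succ G k hk', mul_assoc, ← hlam, ← mul_assoc,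
            ih hk', mul_assoc]
    -- period of lam, pi-parts, good exponent m
    obtain ⟨i, d, hi1, hd1, hper⟩ := exists_period lam
    obtain ⟨dp, c, hdpc, hdp1, hc1, hdpπ, hcπ⟩ := pi_part_exists π d hd1
    have hcoP : Nat.Coprime P dp := by
      rw [Nat.Prime.coprime_iff_not_dvd hPp]
      intro hdvd
      exact (hp s hs).2.1 (hdpπ P hPp hdvd)
    have hco : Nat.Coprime N dp := Nat.Coprime.pow_left _ hcoP
    obtain ⟨m, hm1, hmdp, hmi, hm1le⟩ := exists_good_m N dp i hN1 hdp1 hco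
    obtain ⟨μ, hμ⟩ : ∃ μ : CPT π T, μ = mpow lam m := ⟨_, rfl⟩
    have hμcyc : mpow μ (c+1) = μ := by
      obtain ⟨m', hm'⟩ := hmdp
      rw [hμ, mpow_mul lam (c+1) (by omega) m hm1le,
        show m * (c+1) = m + m' * d by rw [hm', ← hdpc]; ring]
      exact mpow_period hi1 hd1 hper m' m hmi
    have hμcycS : mpow μ.1 (c+1) = μ.1 := by
      have := congrArg Subtype.val hμcyc
      rwa [CPT.mpow_val] at this
    let Lam : CPT π T := ⟨⋃ n, mpow μ.1 (n+1), CPmem.omega c hc1 hμcycS hcπ μ.2⟩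
    have hμh : ∀ n : ℕ, mpow μ (n+1) * H0 = H0 * mpow G (n+1) := by
      intro n
      rw [hμ, mpow_mul lam (n+1) (by omega) m hm1le,
        hlam_pow (m * (n+1)) (Nat.mul_pos hm1le (by omega)),
        mpow_congr_modEq hN1 hcyc (m * (n+1)) (n+1)
          (Nat.mul_pos hm1le (by omega)) (by omega)
          (by simpa using hm1.mul_right (n+1))]
    have hLamH0 : Lam * H0 = H0 * U s hs := by
      apply Subtype.ext
      show (⋃ n, mpow μ.1 (n+1)) * H0.1 = H0.1 * (⋃ n, mpow (g s).1 (n+1))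
      rw [Set.iUnion_mul, Set.mul_iUnion]
      apply Set.iUnion_congr
      intro n
      calc mpow μ.1 (n+1) * H0.1 = (mpow μ (n+1) * H0).1 := by
            rw [CPT.mul_val, CPT.mpow_val]
        _ = (H0 * mpow G (n+1)).1 := by rw [hμh n]
        _ = H0.1 * mpow (g s).1 (n+1) := by rw [CPT.mul_val, CPT.mpow_val]
    -- leL
    have hleL : leL (s * U s hs) s := by
      rw [leL_iff]
      have key : s * U s hs = lmul (omul v (omul (some Lam) w)) s := by
        calc s * U s hs = lmul v H0 * U s hs := by rw [← hv]
          _ = lmul v (H0 * U s hs) := (lmul_mul v _ _).symm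
          _ = lmul v (Lam * H0) := by rw [hLamH0]
          _ = lmul v (lmul (some Lam) (lmul w s)) := by rw [lmul_some, ← hw]
          _ = lmul (omul v (omul (some Lam) w)) s := by rw [lmul_lmul, lmul_lmul, omul_assoc]
      obtain ⟨x, hx⟩ : ∃ x, omul v (omul (some Lam) w) = some x := by
        cases v <;> cases w <;> exact ⟨_, rfl⟩
      exact ⟨some x, by rw [key, hx]⟩
    -- U * G = U
    have hUG : U s hs * G = U s hs := by
      apply Subtype.ext
      show (⋃ n, mpow (g s).1 (n+1)) * G.1 = ⋃ n, mpow (g s).1 (n+1)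
      rw [Set.iUnion_mul]
      apply Set.Subset.antisymm
      · exact Set.iUnion_subset fun n =>
          Set.subset_iUnion (fun n => mpow (g s).1 (n+1)) (n+1)
      · apply Set.iUnion_subset
        intro n
        rcases Nat.eq_zero_or_pos n with rfl | hn
        · have h1 : mpow (g s).1 (0+1) = mpow (g s).1 ((N-1)+1) * G.1 := by
            rw [show (N-1)+1 = N by omega]
            have : mpow (g s).1 (N+1) = mpow (g s).1 N * (g s).1 := mpow_succ _ _ hN1
            rw [← this, hcycS s hs]
            rfl
          rw [h1]
          exact Set.subset_iUnion (fun n => mpow (g s).1 (n+1) * G.1) (N-1)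
        · have h1 : mpow (g s).1 (n+1) = mpow (g s).1 ((n-1)+1) * G.1 := by
            rw [show (n-1)+1 = n by omega]
            exact mpow_succ _ _ hn
          rw [h1]
          exact Set.subset_iUnion (fun n => mpow (g s).1 (n+1) * G.1) (n-1)
    -- not eqH
    have hneq : ¬ eqH (s * U s hs) s := by
      intro habs
      obtain ⟨cc, hcc⟩ := leL_iff.1 habs.1.2
      have hsG : s * G = s := by
        conv_lhs => rw [hcc, ← lmul_mul, mul_assoc, hUG, ← hcc]
      have : H0 * G = H0 := by
        rw [hw, ← lmul_mul, hsG]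
      exact hfree H0 (eqH_refl H0) this
    -- subset
    have hsub : s.1 ⊆ (s * U s hs).1 := by
      have h1 : s.1 = s.1 * (mpow G N).1 := by
        conv_lhs => rw [← hsGN, CPT.mul_val]
      rw [h1, CPT.mpow_val]
      apply Set.mul_subset_mul_left
      show mpow G.1 N ⊆ (U s hs).1
      have : mpow G.1 N = mpow (g s).1 ((N-1)+1) := by rw [show (N-1)+1 = N by omega]
      rw [this]
      exact Set.subset_iUnion (fun n => mpow (g s).1 (n+1)) (N-1)
    exact ⟨hleL, hneq, hsub⟩
  -- assemble
  refine ⟨fun s => if h : piFree π s then none else some (U s h), ?_, ?_, ?_, ?_, ?_, ?_, ?_⟩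
  · intro s hs
    simp [dif_pos hs]
  · intro s hs
    exact ⟨U s hs, dif_neg hs, hUval s hs⟩
  · -- B fixes piFree
    intro s hs
    simp [dif_pos hs]
  · -- ltH
    intro s hs
    show ltH (hmul s (if h : piFree π s then none else some (U s h))) s
    rw [dif_neg hs, hmul_some]
    obtain ⟨hleL, hneq, _⟩ := main s hs
    exact ⟨hleL, Or.inr ⟨U s hs, rfl⟩, hneq⟩
  · -- subset
    intro s
    by_cases hs : piFree π s
    · simp [dif_pos hs]
    · show s.1 ⊆ (hmul s (if h : piFree π s then none else some (U s h))).1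
      rw [dif_neg hs, hmul_some]
      exact (main s hs).2.2
  · intro s
    rfl
  · -- constancy on L-classes
    intro s s' hss'
    show (if h : piFree π s then none else some (U s h)) =
      (if h : piFree π s' then none else some (U s' h))
    by_cases hs : piFree π s
    · rw [dif_pos hs, dif_pos ((piFree_congr hss').1 hs)]
    · have hs' : ¬ piFree π s' := fun h => hs ((piFree_congr hss').2 h)
      rw [dif_neg hs, dif_neg hs']
      congr 1
      apply Subtype.ext
      show (⋃ n, mpow (g s).1 (n+1)) = ⋃ n, mpow (g s').1 (n+1)
      rw [hgL s s' hs hss']
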